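/- arXiv:0706.0929 — 4 statements merged into one kernel-verified Lean document; each statement's English description precedes it below -/
import Mathlib

section
/- (Controller existence, abstract form, sufficiency direction) In a category S with binary pullbacks and a path subcategory P, let p_a : P → A be a P-faithful morphism and s_a : S → A any morphism. If there is a commuting diagram S ←^γ Z →^δ P with s_a ∘ γ = p_a ∘ δ and γ P-open, then the morphism s_a : S → A itself is a bisimulation controller for the plant: the induced morphism μ : Z → S ×_A P (with s ∘ μ = γ and p ∘ μ = δ, where s, p are the pullback projections) is P-open, yielding a diagram S ←^γ Z →^μ S ×_A P of P-open morphisms commuting over A. -/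
open CategoryTheory CategoryTheory.Limits

/-- `f : X ⟶ Y` is `P`-open (relative to the collection `IsPath` of path objects). -/
def POpen {S : Type*} [Category S] (IsPath : S → Prop) {X Y : S} (f : X ⟶ Y) : Prop :=
  ∀ ⦃C D : S⦄, IsPath C → IsPath D →
    ∀ (e : C ⟶ D) (c : C ⟶ X) (d : D ⟶ Y), c ≫ f = e ≫ d →
      ∃ r : D ⟶ X, e ≫ r = c ∧ r ≫ f = d

/-- `f : X ⟶ Y` is `P`-faithful: diagonal lifts of lifting problems whose left edge is a
morphism between path objects are unique. -/
def PFaithful {S : Type*} [Category S] (IsPath : S → Prop) {X Y : S} (f : X ⟶ Y) : Prop :=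
  ∀ ⦃C D : S⦄, IsPath C → IsPath D →
    ∀ (e : C ⟶ D) (c : C ⟶ X) (d : D ⟶ Y), c ≫ f = e ≫ d →
      ∀ r s : D ⟶ X, e ≫ r = c → r ≫ f = d → e ≫ s = c → s ≫ f = d → r = s

/-- Sufficiency: if `p_a` is `P`-faithful and there is a span `S ← Z → P` over `A` with
the left leg `γ` `P`-open, then the specification itself is a bisimulation controller:
the induced morphism `μ : Z ⟶ S ×_A P` is `P`-open, yielding a span
`S ←γ Z →μ S ×_A P` of `P`-open morphisms commuting over `A`. -/
theorem controller_exists_sufficiency {S : Type*} [Category S] [HasPullbacks S]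
    (IsPath : S → Prop) {Sp P A : S} (sa : Sp ⟶ A) (pa : P ⟶ A)
    (hfaith : PFaithful IsPath pa)
    {Z : S} (γ : Z ⟶ Sp) (δ : Z ⟶ P) (hγ : POpen IsPath γ)
    (h : γ ≫ sa = δ ≫ pa) :
    POpen IsPath (pullback.lift γ δ h) ∧
    γ ≫ sa = pullback.lift γ δ h ≫ pullback.fst sa pa ≫ sa := by
  constructor
  · intro C D hC hD e c d hsq
    have hsq1 : c ≫ γ = e ≫ (d ≫ pullback.fst sa pa) := by
      have := congrArg (· ≫ pullback.fst sa pa) hsq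
      simpa [pullback.lift_fst γ δ h] using this
    obtain ⟨r, hr1, hr2⟩ := hγ hC hD e c (d ≫ pullback.fst sa pa) hsq1
    refine ⟨r, hr1, ?_⟩
    have hkey : r ≫ δ = d ≫ pullback.snd sa pa := by
      apply hfaith hC hD e (c ≫ δ) (d ≫ pullback.snd sa pa ≫ pa)
      · rw [Category.assoc, ← h, ← Category.assoc, hsq1]
        simp [pullback.condition]
      · rw [← Category.assoc, hr1]
      · rw [Category.assoc, ← h, ← Category.assoc, hr2]
        simp [pullback.condition]
      · rw [← Category.assoc, ← hsq, Category.assoc, pullback.lift_snd]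
      · simp
    apply pullback.hom_ext <;> simp [hr2, hkey, pullback.lift_fst γ δ h, pullback.lift_snd γ δ h]
  · rw [← Category.assoc, pullback.lift_fst γ δ h]
end

section
/- In the proof of the sufficiency direction of the controller synthesis theorem, the key lifting step holds: given the pullback S ×_A P of s_a : S → A and p_a : P → A with p_a P-faithful, the induced morphism μ : Z → S ×_A P with s ∘ μ = γ (γ P-open) and p ∘ μ = δ, and a lifting problem consisting of e : C → D in P, c : C → Z, d : D → S ×_A P with μ ∘ c = d ∘ e, any diagonal r : D → Z obtained by lifting through the P-open morphism γ = s ∘ μ (i.e., r ∘ e = c and γ ∘ r = s ∘ d) also satisfies μ ∘ r = d. -/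
open CategoryTheory CategoryTheory.Limits

/-- The key lifting step in the sufficiency proof: a diagonal `r` obtained by lifting the
problem through the `P`-open morphism `γ = s ∘ μ` also satisfies `μ ∘ r = d`. -/
theorem key_lifting_step {S : Type*} [Category S] [HasPullbacks S]
    (IsPath : S → Prop) {Sp P A : S} (sa : Sp ⟶ A) (pa : P ⟶ A)
    (hfaith : PFaithful IsPath pa)
    {Z : S} (γ : Z ⟶ Sp) (δ : Z ⟶ P) (hγ : POpen IsPath γ)
    (h : γ ≫ sa = δ ≫ pa)
    {C D : S} (hC : IsPath C) (hD : IsPath D)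
    (e : C ⟶ D) (c : C ⟶ Z) (d : D ⟶ pullback sa pa)
    (hsq : c ≫ pullback.lift γ δ h = e ≫ d)
    (r : D ⟶ Z) (hre : e ≫ r = c) (hrγ : r ≫ γ = d ≫ pullback.fst sa pa) :
    r ≫ pullback.lift γ δ h = d := by
  apply pullback.hom_ext
  · simpa [pullback.lift_fst] using hrγ
  · simp only [Category.assoc, pullback.lift_snd]
    have hcγ : c ≫ γ = e ≫ d ≫ pullback.fst sa pa := by
      have := congrArg (· ≫ pullback.fst sa pa) hsq
      simpa [pullback.lift_fst] using this
    have hcδ : c ≫ δ = e ≫ d ≫ pullback.snd sa pa := by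
      have := congrArg (· ≫ pullback.snd sa pa) hsq
      simpa [pullback.lift_snd] using this
    refine hfaith hC hD e (c ≫ δ) (d ≫ pullback.fst sa pa ≫ sa) ?_ (r ≫ δ)
      (d ≫ pullback.snd sa pa) ?_ ?_ ?_ ?_
    · rw [Category.assoc, ← h, ← Category.assoc, hcγ]
      simp
    · rw [← Category.assoc, hre]
    · rw [Category.assoc, ← h, ← Category.assoc, hrγ]
      simp
    · rw [← Category.assoc, hcδ, Category.assoc]
    · rw [Category.assoc, ← pullback.condition]
end

section
/- Conversely, let T_P and T_S be transition systems over label set L. If there exists a controller transition system T_C such that T_C ∥ T_P is bisimilar to T_S, then there exists a simulation relation from T_S to T_P. -/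
structure TS (Q L : Type*) where
  init : Q
  tr : Q → L → Q → Prop

def par {Q₁ Q₂ L : Type*} (T₁ : TS Q₁ L) (T₂ : TS Q₂ L) : TS (Q₁ × Q₂) L where
  init := (T₁.init, T₂.init)
  tr p l q := T₁.tr p.1 l q.1 ∧ T₂.tr p.2 l q.2

def IsSim {Q₁ Q₂ L : Type*} (T₁ : TS Q₁ L) (T₂ : TS Q₂ L) (R : Q₁ → Q₂ → Prop) : Prop :=
  R T₁.init T₂.init ∧
  ∀ p₁ p₂, R p₁ p₂ → ∀ l q₁, T₁.tr p₁ l q₁ → ∃ q₂, T₂.tr p₂ l q₂ ∧ R q₁ q₂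

def IsBisim {Q₁ Q₂ L : Type*} (T₁ : TS Q₁ L) (T₂ : TS Q₂ L) (R : Q₁ → Q₂ → Prop) : Prop :=
  IsSim T₁ T₂ R ∧
  ∀ p₁ p₂, R p₁ p₂ → ∀ l q₂, T₂.tr p₂ l q₂ → ∃ q₁, T₁.tr p₁ l q₁ ∧ R q₁ q₂

/-- If some controller `T_C` makes `T_C ∥ T_P` bisimilar to `T_S`, then there is a
simulation relation from `T_S` to `T_P`. -/
theorem simulation_from_controller {QS QP L : Type*}
    (TS' : TS QS L) (TP : TS QP L)
    (hctrl : ∃ (QC : Type) (TC : TS QC L) (B : QS → QC × QP → Prop),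
      IsBisim TS' (par TC TP) B) :
    ∃ R : QS → QP → Prop, IsSim TS' TP R := by
  obtain ⟨QC, TC, B, ⟨hinit, hfwd⟩, _⟩ := hctrl
  refine ⟨fun s p => ∃ c, B s (c, p), ⟨TC.init, hinit⟩, ?_⟩
  rintro s p ⟨c, hB⟩ l s' htr
  obtain ⟨⟨c', p'⟩, ⟨_, hP⟩, hB'⟩ := hfwd s (c, p) hB l s' htr
  exact ⟨p', hP, c', hB'⟩
end

section
/- Behavioral parallel composition via shared variables is a pullback in Set-based behavioral systems: given behavioral systems X1 ⊆ ∐_{I} (X_1 × Y)^I and X2 ⊆ ∐_{I} (X_2 × Y)^I (sets of partial trajectories over open intervals I containing 0), the shared-variable composition X1 ∥_y X2 = {(x1, x2) defined on a common interval I | ∃ y : I → Y with (x1,y) ∈ X1 and (x2,y) ∈ X2} is (up to the evident identification) the pullback of the projections X1 → A and X2 → A onto the y-component, where A = ∐_I Y^I is the full behavioral system on Y. -/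
/-- Time intervals: open intervals `]-a, b[` with `a, b > 0`. -/
def Ivl : Type := { I : Set ℝ // ∃ a b : ℝ, 0 < a ∧ 0 < b ∧ I = Set.Ioo (-a) b }

/-- A (partial) behavior for the variable `x` with values in `X`: a time interval together
with a function on it. -/
def Behavior (X : Type*) := Σ I : Ivl, (I.1 → X)

/-- A behavioral system on `X` is a set of behaviors. -/
abbrev BehSys (X : Type*) := Set (Behavior X)

/-- Letterwise (pointwise in time) application of a map on value sets to a behavior. -/
def mapBeh {X Y : Type*} (f : X → Y) (w : Behavior X) : Behavior Y :=
  ⟨w.1, fun t => f (w.2 t)⟩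

/-- A map `f` on value sets is a morphism of behavioral systems if it takes behaviors of
`B₁` into behaviors of `B₂`. -/
def IsMor {X Y : Type*} (B₁ : BehSys X) (B₂ : BehSys Y) (f : X → Y) : Prop :=
  ∀ w ∈ B₁, mapBeh f w ∈ B₂

/-- Shared-variable parallel composition `𝒳₁ ∥_y 𝒳₂`. -/
def shComp {X₁ X₂ Y : Type*} (B₁ : BehSys (X₁ × Y)) (B₂ : BehSys (X₂ × Y)) :
    BehSys (X₁ × X₂) :=
  { w | ∃ y : w.1.1 → Y,
      (⟨w.1, fun t => ((w.2 t).1, y t)⟩ : Behavior (X₁ × Y)) ∈ B₁ ∧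
      (⟨w.1, fun t => ((w.2 t).2, y t)⟩ : Behavior (X₂ × Y)) ∈ B₂ }

/-- The behavioral system on value set `X₁ × X₂ × Y` whose behaviors project into `B₁`
and `B₂`: the pullback object of the two projections onto the `y`-component. -/
def pbSys {X₁ X₂ Y : Type*} (B₁ : BehSys (X₁ × Y)) (B₂ : BehSys (X₂ × Y)) :
    BehSys (X₁ × X₂ × Y) :=
  { w | mapBeh (fun v => (v.1, v.2.2)) w ∈ B₁ ∧ mapBeh (fun v => (v.2.1, v.2.2)) w ∈ B₂ }

/-- Shared-variable composition is, up to the evident identification, the pullback of the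
projections `𝒳₁ → 𝒜` and `𝒳₂ → 𝒜` onto the `y`-component, where `𝒜 = ∐_I Y^I` is the
full behavioral system on `Y`. -/
theorem behavioral_composition_is_pullback {X₁ X₂ Y : Type*}
    (B₁ : BehSys (X₁ × Y)) (B₂ : BehSys (X₂ × Y)) :
    -- the cone legs are morphisms
    IsMor (pbSys B₁ B₂) B₁ (fun v => (v.1, v.2.2)) ∧
    IsMor (pbSys B₁ B₂) B₂ (fun v => (v.2.1, v.2.2)) ∧
    -- the square over the full system 𝒜 on Y commutes
    (Prod.snd ∘ (fun v : X₁ × X₂ × Y => (v.1, v.2.2))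
      = Prod.snd ∘ (fun v : X₁ × X₂ × Y => (v.2.1, v.2.2))) ∧
    -- universal property
    (∀ (V' : Type*) (W : BehSys V') (α' : V' → X₁ × Y) (β' : V' → X₂ × Y),
      IsMor W B₁ α' → IsMor W B₂ β' →
      Prod.snd ∘ α' = Prod.snd ∘ β' →
      ∃! γ : V' → X₁ × X₂ × Y,
        IsMor W (pbSys B₁ B₂) γ ∧
        (fun v => ((γ v).1, (γ v).2.2)) = α' ∧
        (fun v => ((γ v).2.1, (γ v).2.2)) = β') ∧
    -- the evident identification: projecting away the shared variable yields `𝒳₁ ∥_y 𝒳₂`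
    ((fun w => mapBeh (fun v : X₁ × X₂ × Y => (v.1, v.2.1)) w) '' pbSys B₁ B₂
      = shComp B₁ B₂) := by
  refine ⟨fun w hw => hw.1, fun w hw => hw.2, rfl, ?_, ?_⟩
  · intro V' W α' β' hα hβ hsnd
    refine ⟨fun v => ((α' v).1, (β' v).1, (α' v).2), ⟨?_, ?_, ?_⟩, ?_⟩
    · intro w hw
      constructor
      · have := hα w hw
        simpa [mapBeh] using this
      · have := hβ w hw
        have h2 : ∀ v, (α' v).2 = (β' v).2 := fun v => congrFun hsnd v
        simp only [mapBeh, h2]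
        simpa [mapBeh] using this
    · funext v; exact Prod.mk.eta
    · funext v
      have h2 : (α' v).2 = (β' v).2 := congrFun hsnd v
      rw [h2]
    · intro γ ⟨_, h1, h2⟩
      funext v
      have e1 := congrFun h1 v
      have e2 := congrFun h2 v
      have a1 : (γ v).1 = (α' v).1 := congrArg Prod.fst e1
      have a2 : (γ v).2.2 = (α' v).2 := congrArg Prod.snd e1
      have b1 : (γ v).2.1 = (β' v).1 := congrArg Prod.fst e2
      simp [← a1, ← a2, ← b1]
  · ext w
    constructor
    · rintro ⟨w', ⟨h1, h2⟩, rfl⟩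
      exact ⟨fun t => (w'.2 t).2.2, h1, h2⟩
    · rintro ⟨y, h1, h2⟩
      refine ⟨⟨w.1, fun t => ((w.2 t).1, (w.2 t).2, y t)⟩, ⟨h1, h2⟩, ?_⟩
      simp [mapBeh]
      rfl
end
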